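/- Let G = (V,E) be a finite simple graph on n nodes with node weights w ∈ ℝ_+^V and edge weights satisfying w_{ij} ≥ min{w_i, w_j} for all edges ij ∈ E. Then for every integer t ≥ 1, the Handelman bound satisfies p_han^{(t)}(G,w) ≥ (Σ_{i=1}^n w_i)/t, and consequently the Handelman rank satisfies rk_H(G,w) ≥ (Σ_{i=1}^n w_i)/α(G,w). -/

import Mathlib

open MvPolynomial Finset

noncomputable def handTerm {V : Type*} [DecidableEq V] (T I : Finset V) : MvPolynomial V ℝ :=
  (∏ i ∈ I, X i) * ∏ j ∈ T \ I, (1 - X j)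

def InHandelman {V : Type*} [Fintype V] [DecidableEq V] (t : ℕ)
    (p : MvPolynomial V ℝ) : Prop :=
  ∃ c : Finset V → Finset V → ℝ,
    (∀ T I, 0 ≤ c T I) ∧
    p = ∑ T ∈ Finset.univ.filter (fun T : Finset V => T.card ≤ t),
          ∑ I ∈ T.powerset, C (c T I) * handTerm T I

open Classical in
noncomputable def pGW {V : Type*} [Fintype V] (G : SimpleGraph V)
    (w : V → ℝ) (W : V → V → ℝ) : MvPolynomial V ℝ :=
  (∑ i, C (w i) * X i) -
    C (2⁻¹ : ℝ) * ∑ q ∈ Finset.univ.filter (fun q : V × V => G.Adj q.1 q.2),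
      C (W q.1 q.2) * (X q.1 * X q.2)

noncomputable def alphaW {V : Type*} (G : SimpleGraph V) (w : V → ℝ) : ℝ :=
  sSup {v : ℝ | ∃ S : Finset V, (∀ i ∈ S, ∀ j ∈ S, ¬ G.Adj i j) ∧ v = ∑ i ∈ S, w i}

noncomputable def Lf {V : Type*} (s : ℝ) (p : MvPolynomial V ℝ) : ℝ :=
  Polynomial.eval 0 (aeval (fun _ : V => (Polynomial.X : Polynomial ℝ)) p)
    + s * Polynomial.eval 0
        (Polynomial.derivative (aeval (fun _ : V => (Polynomial.X : Polynomial ℝ)) p))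

lemma Lf_C {V : Type*} (s a : ℝ) : Lf (V := V) s (C a) = a := by
  simp [Lf]

lemma Lf_sub {V : Type*} (s : ℝ) (p q : MvPolynomial V ℝ) :
    Lf s (p - q) = Lf s p - Lf s q := by
  simp [Lf]; ring

lemma Lf_sum {V : Type*} {ι : Type*} (s : ℝ) (u : Finset ι) (f : ι → MvPolynomial V ℝ) :
    Lf s (∑ x ∈ u, f x) = ∑ x ∈ u, Lf s (f x) := by
  simp [Lf, map_sum, Polynomial.eval_finset_sum, Finset.mul_sum, Finset.sum_add_distrib]

lemma Lf_C_mul {V : Type*} (s a : ℝ) (p : MvPolynomial V ℝ) :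
    Lf s (C a * p) = a * Lf s p := by
  simp [Lf, Polynomial.derivative_C_mul]; ring

lemma uni_nonneg (s : ℝ) (hs : 0 ≤ s) (a b : ℕ) (hb : s * b ≤ 1) :
    0 ≤ Polynomial.eval 0 ((Polynomial.X : Polynomial ℝ) ^ a * (1 - Polynomial.X) ^ b)
        + s * Polynomial.eval 0 (Polynomial.derivative
            ((Polynomial.X : Polynomial ℝ) ^ a * (1 - Polynomial.X) ^ b)) := by
  rw [Polynomial.derivative_mul, Polynomial.derivative_X_pow, Polynomial.derivative_pow]
  match a with
  | 0 => simp; linarith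
  | 1 => simpa using hs
  | (n+2) => simp [zero_pow]

lemma Lf_handTerm_nonneg {V : Type*} [DecidableEq V] (s : ℝ) (hs : 0 ≤ s)
    (T I : Finset V) (hb : s * T.card ≤ 1) : 0 ≤ Lf s (handTerm T I) := by
  have h : aeval (fun _ : V => (Polynomial.X : Polynomial ℝ)) (handTerm T I)
      = (Polynomial.X : Polynomial ℝ) ^ I.card * (1 - Polynomial.X) ^ (T \ I).card := by
    simp [handTerm, map_prod]
  rw [Lf, h]
  refine uni_nonneg s hs _ _ (le_trans ?_ hb)
  have : ((T \ I).card : ℝ) ≤ T.card := by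
    exact_mod_cast Finset.card_le_card (Finset.sdiff_subset)
  nlinarith

lemma Lf_pGW {V : Type*} [Fintype V] (G : SimpleGraph V) (w : V → ℝ) (W : V → V → ℝ)
    (s : ℝ) : Lf s (pGW G w W) = s * ∑ i, w i := by
  simp [Lf, pGW, map_sum, Polynomial.eval_finset_sum, Polynomial.derivative_C_mul,
    Polynomial.derivative_mul, Finset.mul_sum]

lemma key {V : Type*} [Fintype V] [DecidableEq V] (G : SimpleGraph V) (w : V → ℝ)
    (W : V → V → ℝ) (s : ℝ) (hs : 0 ≤ s) (t : ℕ) (hst : s * t ≤ 1) (lam : ℝ)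
    (h : InHandelman t (C lam - pGW G w W)) : s * ∑ i, w i ≤ lam := by
  obtain ⟨c, hc, heq⟩ := h
  have hL := congrArg (Lf s) heq
  rw [Lf_sub, Lf_C, Lf_pGW, Lf_sum] at hL
  have hnn : 0 ≤ ∑ T ∈ Finset.univ.filter (fun T : Finset V => T.card ≤ t),
      Lf s (∑ I ∈ T.powerset, C (c T I) * handTerm T I) := by
    refine Finset.sum_nonneg fun T hT => ?_
    rw [Lf_sum]
    refine Finset.sum_nonneg fun I _ => ?_
    rw [Lf_C_mul]
    have hTt : (T.card : ℝ) ≤ t := by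
      exact_mod_cast (Finset.mem_filter.mp hT).2
    refine mul_nonneg (hc T I) (Lf_handTerm_nonneg s hs T I (le_trans ?_ hst))
    nlinarith
  linarith

/-- For node weights `w ≥ 0` and edge weights `w_{ij} ≥ min(w_i,w_j)`:
for every `t ≥ 1` the Handelman bound satisfies `p_han^{(t)}(G,w) ≥ (Σ_i w_i)/t`
(i.e. every feasible `λ` with `λ − p_{G,w} ∈ H_t` satisfies `λ ≥ (Σ_i w_i)/t`), and
consequently the Handelman rank satisfies `rk_H(G,w) ≥ (Σ_i w_i)/α(G,w)`
(i.e. every `t` with `f_{G,w} ∈ H_t` satisfies `t ≥ (Σ_i w_i)/α(G,w)`). -/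
theorem handelman_rank_lower_bound {V : Type*} [Fintype V] [DecidableEq V]
    (G : SimpleGraph V) (w : V → ℝ) (W : V → V → ℝ) (hw : ∀ v, 0 ≤ w v)
    (hWs : ∀ i j, W i j = W j i)
    (hW : ∀ i j, G.Adj i j → min (w i) (w j) ≤ W i j) :
    (∀ t : ℕ, 1 ≤ t → ∀ lam : ℝ, InHandelman t (C lam - pGW G w W) →
      (∑ i, w i) / (t : ℝ) ≤ lam) ∧
    (∀ t : ℕ, InHandelman t (C (alphaW G w) - pGW G w W) →
      (∑ i, w i) / alphaW G w ≤ (t : ℝ)) := by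
  have hwsum : 0 ≤ ∑ i, w i := Finset.sum_nonneg fun i _ => hw i
  have part1 : ∀ t : ℕ, 1 ≤ t → ∀ lam : ℝ, InHandelman t (C lam - pGW G w W) →
      (∑ i, w i) / (t : ℝ) ≤ lam := by
    intro t ht lam h
    have htpos : (0:ℝ) < t := by exact_mod_cast ht
    have := key G w W (t : ℝ)⁻¹ (by positivity) t (by field_simp; exact le_rfl) lam h
    rw [div_eq_inv_mul]
    exact this
  refine ⟨part1, fun t h => ?_⟩
  -- alphaW is nonneg
  have hmem : (0:ℝ) ∈ {v : ℝ | ∃ S : Finset V, (∀ i ∈ S, ∀ j ∈ S, ¬ G.Adj i j) ∧ v = ∑ i ∈ S, w i} :=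
    ⟨∅, by simp⟩
  have hbdd : BddAbove {v : ℝ | ∃ S : Finset V, (∀ i ∈ S, ∀ j ∈ S, ¬ G.Adj i j) ∧ v = ∑ i ∈ S, w i} := by
    refine ⟨∑ i, w i, fun v hv => ?_⟩
    obtain ⟨S, -, rfl⟩ := hv
    exact Finset.sum_le_sum_of_subset_of_nonneg (Finset.subset_univ S) fun i _ _ => hw i
  have halpha : 0 ≤ alphaW G w := le_csSup hbdd hmem
  rcases Nat.eq_zero_or_pos t with rfl | ht
  · -- t = 0 : show ∑ w = 0
    have hall : ∀ s : ℝ, 0 ≤ s → s * ∑ i, w i ≤ alphaW G w := fun s hs =>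
      key G w W s hs 0 (by simp) _ h
    have hzero : ∑ i, w i = 0 := by
      by_contra hne
      have hpos : 0 < ∑ i, w i := lt_of_le_of_ne hwsum (Ne.symm hne)
      have := hall ((alphaW G w + 1) / (∑ i, w i)) (by positivity)
      rw [div_mul_cancel₀ _ (ne_of_gt hpos)] at this
      linarith
    rw [hzero, zero_div]
    simp
  · have hb := part1 t ht _ h
    rcases eq_or_lt_of_le halpha with heq | hpos
    · have htpos : (0:ℝ) < t := by exact_mod_cast ht
      have : ∑ i, w i = 0 := by
        have h1 : (∑ i, w i) / (t:ℝ) ≤ 0 := heq ▸ hb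
        have h2 : 0 ≤ (∑ i, w i) / (t:ℝ) := by positivity
        have := le_antisymm h1 h2
        field_simp at this
        linarith [this]
      rw [this, zero_div]
      positivity
    · have htpos : (0:ℝ) < t := by exact_mod_cast ht
      rw [div_le_iff₀ hpos]
      rw [div_le_iff₀ htpos] at hb
      nlinarith
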